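/- The expected candidate set size under p(s|y) = 2^{−(k−1)} ∑_{j∈s} y_j equals (k+1)/2, independently of y ∈ Δ^{k−1}. -/
import Mathlib


open Finset

lemma sum_card_powerset {α : Type*} [DecidableEq α] (u : Finset α) :
    2 * ∑ t ∈ u.powerset, t.card = u.card * 2 ^ u.card := by
  induction u using Finset.induction_on with
  | empty => simp
  | @insert a u ha ih =>
    rw [Finset.sum_powerset_insert ha, Finset.card_insert_of_notMem ha]
    have h2 : ∀ t ∈ u.powerset, (insert a t).card = t.card + 1 := by
      intro t ht
      rw [Finset.mem_powerset] at ht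
      exact Finset.card_insert_of_notMem (fun h => ha (ht h))
    rw [Finset.sum_congr rfl h2, Finset.sum_add_distrib, Finset.sum_const,
      Finset.card_powerset, smul_eq_mul, mul_one]
    ring_nf
    ring_nf at ih
    omega

theorem expected_candidate_set_size (k : ℕ) (hk : 1 ≤ k)
    (y : Fin k → ℝ) (hy0 : ∀ j, 0 ≤ y j) (hy1 : ∑ j, y j = 1)
    (P : Finset (Fin k) → ℝ)
    (hP : ∀ s, P s = (1 / 2 ^ (k - 1)) * ∑ j ∈ s, y j) :
    ∑ s ∈ (Finset.univ : Finset (Fin k)).powerset, (s.card : ℝ) * P s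
      = ((k : ℝ) + 1) / 2 := by
  -- key: for each j, the sum over subsets containing j of their cardinalities
  have key : ∀ j : Fin k,
      (2:ℝ) * ∑ s ∈ (univ : Finset (Fin k)).powerset, (if j ∈ s then (s.card:ℝ) else 0)
        = ((k:ℝ)+1) * 2^(k-1) := by
    intro j
    have hj : j ∉ (univ.erase j) := Finset.notMem_erase j univ
    have huniv : insert j (univ.erase j) = univ := Finset.insert_erase (mem_univ j)
    rw [← huniv, Finset.sum_powerset_insert hj]
    have h1 : ∑ t ∈ (univ.erase j).powerset, (if j ∈ t then (t.card:ℝ) else 0) = 0 := by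
      apply Finset.sum_eq_zero; intro t ht
      rw [Finset.mem_powerset] at ht
      have : j ∉ t := fun h => hj (ht h)
      simp [this]
    have h2 : ∀ t ∈ (univ.erase j).powerset,
        (if j ∈ insert j t then ((insert j t).card:ℝ) else 0) = (t.card:ℝ) + 1 := by
      intro t ht
      rw [Finset.mem_powerset] at ht
      have hjt : j ∉ t := fun h => hj (ht h)
      simp [Finset.card_insert_of_notMem hjt]
    rw [h1, Finset.sum_congr rfl h2, zero_add]
    have hcard : (univ.erase j).card = k - 1 := by
      simp [Finset.card_erase_of_mem]
    have hnat := sum_card_powerset (univ.erase j)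
    rw [hcard] at hnat
    have hR : (2:ℝ) * ∑ t ∈ (univ.erase j).powerset, (t.card:ℝ)
        = ((k-1 : ℕ) : ℝ) * 2 ^ (k-1) := by
      exact_mod_cast congrArg (Nat.cast (R := ℝ)) hnat
    have hpcard : ((univ.erase j).powerset.card : ℝ) = 2 ^ (k-1) := by
      rw [Finset.card_powerset, hcard]; push_cast; ring
    rw [Finset.sum_add_distrib, Finset.sum_const, nsmul_eq_mul, mul_one, mul_add, hR, hpcard]
    have hcast : ((k-1 : ℕ) : ℝ) = (k:ℝ) - 1 := by
      rw [Nat.cast_sub hk]; norm_num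
    rw [hcast]; ring
  have hA : ∀ j : Fin k,
      ∑ s ∈ (univ : Finset (Fin k)).powerset, (if j ∈ s then (s.card:ℝ) else 0)
        = ((k:ℝ)+1) * 2^(k-1) / 2 := by
    intro j
    have := key j
    linarith
  have h2pos : (0:ℝ) < 2 ^ (k-1) := by positivity
  calc ∑ s ∈ (Finset.univ : Finset (Fin k)).powerset, (s.card : ℝ) * P s
      = ∑ s ∈ (univ : Finset (Fin k)).powerset,
          (1 / 2 ^ (k - 1)) * ∑ j : Fin k, (if j ∈ s then (s.card:ℝ) * y j else 0) := by
        refine Finset.sum_congr rfl fun s _ => ?_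
        rw [hP s, Finset.sum_ite_mem, Finset.univ_inter,
          show (∑ j ∈ s, (s.card:ℝ) * y j) = (s.card:ℝ) * ∑ j ∈ s, y j from
            (Finset.mul_sum _ _ _).symm]
        ring
    _ = (1 / 2 ^ (k - 1)) * ∑ j : Fin k,
          ∑ s ∈ (univ : Finset (Fin k)).powerset, (if j ∈ s then (s.card:ℝ) * y j else 0) := by
        rw [← Finset.mul_sum, Finset.sum_comm]
    _ = (1 / 2 ^ (k - 1)) * ∑ j : Fin k,
          y j * ∑ s ∈ (univ : Finset (Fin k)).powerset, (if j ∈ s then (s.card:ℝ) else 0) := by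
        congr 1
        refine Finset.sum_congr rfl fun j _ => ?_
        rw [Finset.mul_sum]
        refine Finset.sum_congr rfl fun s _ => ?_
        split <;> ring
    _ = (1 / 2 ^ (k - 1)) * ∑ j : Fin k, y j * (((k:ℝ)+1) * 2^(k-1) / 2) := by
        congr 1
        exact Finset.sum_congr rfl fun j _ => by rw [hA j]
    _ = ((k : ℝ) + 1) / 2 := by
        rw [← Finset.sum_mul, hy1, one_mul]
        field_simp
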